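/- Let σ' be an SOS polynomial in R[x] with a positive semidefinite Gram matrix Q' indexed by a finite monomial set B ⊆ N^n, and let R ⊆ Z_2^n. Define σ = (x^B)^T Q x^B where Q is obtained from Q' by zeroing out all entries Q'_{βγ} with r·(β+γ) ≢ 0 (mod 2) for some r ∈ R. Then σ is again an SOS polynomial, and every exponent α in the support of σ satisfies r·α ≡ 0 (mod 2) for all r ∈ R. -/

import Mathlib

open scoped Classical

/-- If `σ' = (x^B)ᵀ Q' x^B` is SOS with PSD Gram matrix `Q'` and `Q` is obtained from
`Q'` by zeroing out entries violating the sign symmetries `R`, then `σ = (x^B)ᵀ Q x^B`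
is again SOS and every exponent in its support respects all sign symmetries in `R`. -/
theorem sos_truncation_sign_symmetric (n : ℕ) (ι : Type*) [Fintype ι]
    (B : ι → (Fin n →₀ ℕ)) (hB : Function.Injective B)
    (R : Set (Fin n → ZMod 2)) (Q' : Matrix ι ι ℝ) (hQ' : Q'.PosSemidef)
    (Q : Matrix ι ι ℝ)
    (hQ : ∀ β γ, Q β γ =
      if ∀ r ∈ R, ∑ i, r i * (((B β + B γ) i : ℕ) : ZMod 2) = 0 then Q' β γ else 0) :
    (∃ (k : ℕ) (f : Fin k → MvPolynomial (Fin n) ℝ),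
        (∑ β, ∑ γ, Q β γ • (MvPolynomial.monomial (B β + B γ) (1 : ℝ))) = ∑ i, f i ^ 2) ∧
    ∀ α ∈ (∑ β, ∑ γ, Q β γ • (MvPolynomial.monomial (B β + B γ) (1 : ℝ))).support,
      ∀ r ∈ R, ∑ i, r i * ((α i : ℕ) : ZMod 2) = 0 := by
  classical
  -- the sign-symmetry "signature" of a monomial index
  set φ : ι → (R → ZMod 2) := fun β r => ∑ i, (r : Fin n → ZMod 2) i * ((B β i : ℕ) : ZMod 2)
    with hφ
  have h2 : ∀ a b : ZMod 2, a + b = 0 ↔ a = b := by decide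
  have hsum : ∀ β γ (r : Fin n → ZMod 2),
      (∑ i, r i * (((B β + B γ) i : ℕ) : ZMod 2)) =
        (∑ i, r i * ((B β i : ℕ) : ZMod 2)) + ∑ i, r i * ((B γ i : ℕ) : ZMod 2) := by
    intro β γ r
    rw [← Finset.sum_add_distrib]
    refine Finset.sum_congr rfl fun i _ => ?_
    simp [Finsupp.add_apply, mul_add]
  have hcond : ∀ β γ,
      (∀ r ∈ R, ∑ i, r i * (((B β + B γ) i : ℕ) : ZMod 2) = 0) ↔ φ β = φ γ := by
    intro β γ
    constructor
    · intro h
      funext r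
      have := h r r.2
      rw [hsum] at this
      exact (h2 _ _).mp this
    · intro h r hr
      rw [hsum]
      exact (h2 _ _).mpr (congrFun h ⟨r, hr⟩)
  have hQ2 : ∀ β γ, Q β γ = if φ β = φ γ then Q' β γ else 0 := by
    intro β γ
    rw [hQ β γ, if_congr (hcond β γ) rfl rfl]
  constructor
  · -- SOS part
    obtain ⟨A, hA⟩ : ∃ A : Matrix ι ι ℝ, Q' = A.conjTranspose * A := by
      open scoped MatrixOrder in
      exact ⟨CFC.sqrt Q', by
        rw [(Matrix.nonneg_iff_posSemidef.mp (CFC.sqrt_nonneg Q')).isHermitian.eq,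
          CFC.sqrt_mul_sqrt_self Q' hQ'.nonneg]⟩
    have hQ'e : ∀ β γ, Q' β γ = ∑ k, A k β * A k γ := by
      intro β γ
      rw [hA, Matrix.mul_apply]
      rfl
    set S : Finset (R → ZMod 2) := Finset.image φ Finset.univ with hS
    set g : ↥S × ι → MvPolynomial (Fin n) ℝ := fun p =>
      ∑ β, (if φ β = (p.1 : R → ZMod 2) then A p.2 β else 0) •
        MvPolynomial.monomial (B β) (1 : ℝ) with hg
    have key : (∑ p : ↥S × ι, g p ^ 2) =
        ∑ β, ∑ γ, Q β γ • (MvPolynomial.monomial (B β + B γ) (1 : ℝ)) := by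
      have expand : ∀ p : ↥S × ι, g p ^ 2 =
          ∑ β, ∑ γ, ((if φ β = (p.1 : R → ZMod 2) then A p.2 β else 0) *
            (if φ γ = (p.1 : R → ZMod 2) then A p.2 γ else 0)) •
            MvPolynomial.monomial (B β + B γ) (1 : ℝ) := by
        intro p
        simp only [hg]
        rw [sq, Fintype.sum_mul_sum]
        refine Finset.sum_congr rfl fun β _ => Finset.sum_congr rfl fun γ _ => ?_
        rw [smul_mul_smul_comm, MvPolynomial.monomial_mul, one_mul]
      simp only [expand]
      rw [Finset.sum_comm]
      refine Finset.sum_congr rfl fun β _ => ?_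
      rw [Finset.sum_comm]
      refine Finset.sum_congr rfl fun γ _ => ?_
      rw [← Finset.sum_smul]
      congr 1
      rw [Fintype.sum_prod_type]
      have hmem : φ β ∈ S := Finset.mem_image_of_mem φ (Finset.mem_univ β)
      calc ∑ v : ↥S, ∑ k : ι,
            (if φ β = (v : R → ZMod 2) then A k β else 0) *
              (if φ γ = (v : R → ZMod 2) then A k γ else 0)
          = ∑ v ∈ S, ∑ k : ι,
              (if φ β = v then A k β else 0) * (if φ γ = v then A k γ else 0) := by
            rw [Finset.sum_coe_sort S
              (fun v => ∑ k : ι, (if φ β = v then A k β else 0) * (if φ γ = v then A k γ else 0))]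
        _ = ∑ v ∈ S, if φ β = v then (if φ γ = v then ∑ k, A k β * A k γ else 0) else 0 := by
            refine Finset.sum_congr rfl fun v _ => ?_
            by_cases h1 : φ β = v <;> by_cases h3 : φ γ = v <;>
              simp [h1, h3, Finset.mul_sum, Finset.sum_mul]
        _ = if φ γ = φ β then ∑ k, A k β * A k γ else 0 := by
            rw [Finset.sum_ite_eq S (φ β)
              (fun v => if φ γ = v then ∑ k, A k β * A k γ else 0), if_pos hmem]
        _ = Q β γ := by
            rw [hQ2 β γ, hQ'e β γ]
            by_cases h : φ β = φ γ <;> simp [h, eq_comm]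
    refine ⟨Fintype.card (↥S × ι), fun j => g ((Fintype.equivFin (↥S × ι)).symm j), ?_⟩
    rw [← key, ← Equiv.sum_comp (Fintype.equivFin (↥S × ι)).symm (fun p => g p ^ 2)]
  · -- support part
    intro α hα r hr
    have h1 := MvPolynomial.support_sum hα
    obtain ⟨β, -, h1⟩ := Finset.mem_biUnion.mp h1
    have h3 := MvPolynomial.support_sum h1
    obtain ⟨γ, -, h3⟩ := Finset.mem_biUnion.mp h3
    have hQne : Q β γ ≠ 0 := by
      intro h0
      rw [h0, zero_smul] at h3
      simp at h3
    have hαeq : α = B β + B γ := by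
      have := MvPolynomial.support_smul h3
      rw [MvPolynomial.support_monomial] at this
      simpa using this
    have hcnd : ∀ r ∈ R, ∑ i, r i * (((B β + B γ) i : ℕ) : ZMod 2) = 0 := by
      by_contra h
      rw [hQ β γ, if_neg h] at hQne
      exact hQne rfl
    rw [hαeq]
    exact hcnd r hr
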